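/- Let x, y, z be points in a real inner product space with z ∈ [x,y]_ε, meaning e^{-ε}‖z - x‖ + ‖y - z‖ ≤ ‖y - x‖, where ε > 0 and x ≠ y. Let w = x + ‖z - x‖ · (y - x)/‖y - x‖. Then ‖z - w‖^2 ≤ 4(1 - e^{-2ε}) ‖z - x‖^2. -/

import Mathlib

/-- ε-cone approximation lemma in a real inner product space. -/
theorem stmt2 {E : Type*} [NormedAddCommGroup E] [InnerProductSpace ℝ E]
    (x y z : E) (ε : ℝ) (hε : 0 < ε) (hxy : x ≠ y)
    (hz : Real.exp (-ε) * ‖z - x‖ + ‖y - z‖ ≤ ‖y - x‖) :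
    ‖z - (x + (‖z - x‖ / ‖y - x‖) • (y - x))‖ ^ 2
      ≤ 4 * (1 - Real.exp (-2 * ε)) * ‖z - x‖ ^ 2 := by
  set r := ‖z - x‖ with hr
  set d := ‖y - x‖ with hdd
  set a := Real.exp (-ε) with haa
  have hd : 0 < d := by
    rw [hdd, norm_pos_iff, sub_ne_zero]
    exact fun h => hxy h.symm
  have hrn : 0 ≤ r := norm_nonneg _
  have ha0 : 0 < a := Real.exp_pos _
  have ha1 : a ≤ 1 := by
    rw [haa, ← Real.exp_zero]
    exact Real.exp_le_exp.mpr (by linarith)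
  have ha2 : Real.exp (-2 * ε) = a ^ 2 := by
    rw [show (-2 : ℝ) * ε = -ε + -ε by ring, Real.exp_add, haa, sq]
  have hyz : ‖y - z‖ ≤ d - a * r := by linarith
  have hyzsq : ‖y - z‖ ^ 2 ≤ (d - a * r) ^ 2 :=
    pow_le_pow_left₀ (norm_nonneg _) hyz 2
  have e1 : ‖y - z‖ ^ 2 = d ^ 2 - 2 * inner ℝ (z - x) (y - x) + r ^ 2 := by
    have h0 : y - z = (y - x) - (z - x) := by abel
    rw [h0, norm_sub_sq_real, real_inner_comm]
  have e2 : ‖z - (x + (r / d) • (y - x))‖ ^ 2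
      = r ^ 2 - 2 * (r / d) * inner ℝ (z - x) (y - x) + (r / d) ^ 2 * d ^ 2 := by
    have h1 : z - (x + (r / d) • (y - x)) = (z - x) - (r / d) • (y - x) := by abel
    rw [h1, norm_sub_sq_real, real_inner_smul_right, norm_smul, Real.norm_eq_abs,
      abs_of_nonneg (div_nonneg hrn hd.le)]
    ring
  have hI : 2 * inner ℝ (z - x) (y - x) ≥ r ^ 2 * (1 - a ^ 2) + 2 * a * r * d := by
    nlinarith [hyzsq, e1]
  rw [e2, ha2]
  set t := r / d with htdef
  have ht0 : 0 ≤ t := div_nonneg hrn hd.le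
  have htd : t * d = r := div_mul_cancel₀ _ hd.ne'
  have ht2 : t ^ 2 * d ^ 2 = r ^ 2 := by rw [← htd]; ring
  have h3 : t * (r ^ 2 * (1 - a ^ 2) + 2 * a * r * d)
      = t * r ^ 2 * (1 - a ^ 2) + 2 * a * r ^ 2 := by rw [← htd]; ring
  nlinarith [mul_le_mul_of_nonneg_left hI ht0, ht2, h3,
    mul_nonneg (mul_nonneg ht0 (sq_nonneg r)) (by nlinarith : (0:ℝ) ≤ 1 - a ^ 2),
    mul_nonneg (sq_nonneg r) (by nlinarith : (0:ℝ) ≤ (1 - a) * (2 + 4 * a))]
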